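/- arXiv:2407.08497 — 4 statements merged into one kernel-verified Lean document; each statement's English description precedes it below -/
import Mathlib

section
/- If a gradual semantics σ satisfies s-stability and the QBAF Q is acyclic (its attack/support graph has no directed cycles), then the trivial counterfactual τ' — defined by τ'(α*) = s* and τ'(α) = 0 for all α ≠ α* — is a solution to the strong counterfactual problem, i.e., the strength of the topic argument α* in Q_{τ'} equals the desired strength s*. -/
/-- s-stability: if all attackers and supporters of `α` have strength 0,
then the strength of `α` equals its base score. -/
def SStable {A : Type*} (att sup : A → A → Prop) (σ : (A → ℝ) → A → ℝ) : Prop :=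
  ∀ (τ : A → ℝ) (α : A), (∀ β, att β α ∨ sup β α → σ τ β = 0) → σ τ α = τ α

/-- If the semantics satisfies s-stability and the QBAF is acyclic, then the trivial
counterfactual (base score `s*` for the topic argument, `0` elsewhere) solves the
strong counterfactual problem. -/
theorem trivial_counterfactual_solves_strong
    {A : Type*} [Fintype A] [DecidableEq A]
    (att sup : A → A → Prop) (hdisj : ∀ a b, ¬ (att a b ∧ sup a b))
    (σ : (A → ℝ) → A → ℝ)
    (τ : A → ℝ) (hτ : ∀ a, τ a ∈ Set.Icc (0 : ℝ) 1)
    (αs : A) (ss : ℝ) (hss : ss ∈ Set.Icc (0 : ℝ) 1)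
    (hneq : σ τ αs ≠ ss)
    (hstab : SStable att sup σ)
    (hacyc : ∀ a, ¬ Relation.TransGen (fun x y => att x y ∨ sup x y) a a) :
    σ (fun a => if a = αs then ss else 0) αs = ss := by
  set r : A → A → Prop := fun x y => att x y ∨ sup x y with hr
  set τ' : A → ℝ := fun a => if a = αs then ss else 0 with hτ'
  -- TransGen r is transitive and irreflexive, hence well-founded on a finite type
  have htrans : Transitive (Relation.TransGen r) := fun _ _ _ => Relation.TransGen.trans
  have hirr : ∀ a, ¬ Relation.TransGen r a a := hacyc
  have hwf : WellFounded (Relation.TransGen r) := by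
    have : IsTrans A (Relation.TransGen r) := ⟨htrans⟩
    have : IsIrrefl A (Relation.TransGen r) := ⟨hirr⟩
    exact Finite.wellFounded_of_trans_of_irrefl _
  have hwfr : WellFounded r :=
    Subrelation.wf (fun h => Relation.TransGen.single h) hwf
  -- Key claim: any β not reachable from αs has strength 0
  have key : ∀ β, ¬ Relation.ReflTransGen r αs β → σ τ' β = 0 := by
    intro β
    induction β using hwfr.induction with
    | _ β ih =>
      intro hβ
      have hβne : β ≠ αs := by
        rintro rfl; exact hβ Relation.ReflTransGen.refl
      have : σ τ' β = τ' β := by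
        apply hstab
        intro γ hγ
        apply ih γ hγ
        intro hpath
        exact hβ (hpath.tail hγ)
      rw [this]
      simp [hτ', hβne]
  have : σ τ' αs = τ' αs := by
    apply hstab
    intro γ hγ
    apply key γ
    intro hpath
    exact hacyc αs (Relation.TransGen.tail' hpath hγ)
  rw [this]
  simp [hτ']
end

section
/- If a gradual semantics σ satisfies directionality, then for any arguments α, β with β neutral to α (i.e., there is no path from β to α in the attack/support graph), changing only the base score of β leaves the strength of α unchanged: for any τ' with τ'(γ) = τ(γ) for all γ ≠ β, σ_{τ'}(α) = σ(α). -/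
open Finset

/-- A (directed) path from `a` to `c` given as a nonempty list of consecutive edges. -/
inductive PathTo {A : Type*} (R : A → A → Prop) : A → A → List (A × A) → Prop
  | single {a b : A} : R a b → PathTo R a b [(a, b)]
  | cons {a b c : A} {l : List (A × A)} : R a b → PathTo R b c l → PathTo R a c ((a, b) :: l)

/-- The edge relation of a QBAF: attack or support. -/
def edgeRel {A : Type*} (att sup : A → A → Prop) : A → A → Prop :=
  fun x y => att x y ∨ sup x y

/-- Number of attack edges on a path (given as a list of edges). -/
def attCount {A : Type*} (att : A → A → Prop) [DecidableRel att] (l : List (A × A)) : ℕ :=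
  l.countP (fun e => decide (att e.1 e.2))

/-- `β` is neutral to `α`: there is no path from `β` to `α`. -/
def Neutral {A : Type*} (att sup : A → A → Prop) (β α : A) : Prop :=
  ∀ l, ¬ PathTo (edgeRel att sup) β α l

/-- `β` is positive to `α`: some path exists and every path from `β` to `α`
contains an even number of attack edges. -/
def PositiveTo {A : Type*} (att sup : A → A → Prop) [DecidableRel att] (β α : A) : Prop :=
  (∃ l, PathTo (edgeRel att sup) β α l) ∧
    ∀ l, PathTo (edgeRel att sup) β α l → Even (attCount att l)

/-- `β` is negative to `α`: some path exists and every path from `β` to `α`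
contains an odd number of attack edges. -/
def NegativeTo {A : Type*} (att sup : A → A → Prop) [DecidableRel att] (β α : A) : Prop :=
  (∃ l, PathTo (edgeRel att sup) β α l) ∧
    ∀ l, PathTo (edgeRel att sup) β α l → Odd (attCount att l)

/-- Directionality (as used in the paper): the strength of an argument depends only on
its own base score and the base scores of the arguments from which it is reachable. -/
def Directional {A : Type*} (att sup : A → A → Prop) (σ : (A → ℝ) → A → ℝ) : Prop :=
  ∀ (τ₁ τ₂ : A → ℝ) (α : A), τ₁ α = τ₂ α →
    (∀ γ, (∃ l, PathTo (edgeRel att sup) γ α l) → τ₁ γ = τ₂ γ) →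
    σ τ₁ α = σ τ₂ α

/-- Monotonicity: increasing the base score of a single-path connected attacker
(supporter) of `α` does not increase (decrease) the strength of `α`. -/
def MonotoneSem {A : Type*} (att sup : A → A → Prop) (σ : (A → ℝ) → A → ℝ) : Prop :=
  ∀ (α β : A) (τ₁ τ₂ : A → ℝ),
    (∃! l, PathTo (edgeRel att sup) β α l) →
    τ₁ β ≤ τ₂ β → (∀ γ, γ ≠ β → τ₁ γ = τ₂ γ) →
    (att β α → σ τ₂ α ≤ σ τ₁ α) ∧ (sup β α → σ τ₁ α ≤ σ τ₂ α)

/-- If the semantics satisfies directionality, then changing only the base score of an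
argument neutral to `α` leaves the strength of `α` unchanged. -/
theorem neutral_no_effect
    {A : Type*} [Fintype A]
    (att sup : A → A → Prop) (hdisj : ∀ a b, ¬ (att a b ∧ sup a b))
    (σ : (A → ℝ) → A → ℝ) (hdir : Directional att sup σ)
    (α β : A) (hab : α ≠ β) (hneu : Neutral att sup β α)
    (τ τ' : A → ℝ) (hτ : ∀ a, τ a ∈ Set.Icc (0 : ℝ) 1)
    (hτ' : ∀ a, τ' a ∈ Set.Icc (0 : ℝ) 1)
    (heq : ∀ γ, γ ≠ β → τ' γ = τ γ) :
    σ τ' α = σ τ α := by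
  apply hdir
  · exact heq α hab
  · intro γ hγ
    rcases hγ with ⟨l, hl⟩
    refine heq γ fun h => ?_
    exact hneu l (h ▸ hl)
end

section
/- (Nullified-Validity, neutral case) Let τ* be a valid counterfactual for the strong (resp. δ-approximate, weak) counterfactual problem, and let β ≠ α* be neutral to the topic argument α*. Define τ⁰ by τ⁰(β) = 0 and τ⁰(γ) = τ*(γ) for γ ≠ β. If σ satisfies directionality, then τ⁰ is still a valid counterfactual for the same problem (provided τ⁰ ≠ τ). -/
open Finset

/-- A valid counterfactual for the strong counterfactual problem. -/
def ValidStrong {A : Type*} (σ : (A → ℝ) → A → ℝ) (τ : A → ℝ) (αs : A) (ss : ℝ)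
    (τ' : A → ℝ) : Prop :=
  τ' ≠ τ ∧ (∀ a, τ' a ∈ Set.Icc (0 : ℝ) 1) ∧ σ τ' αs = ss

/-- A valid counterfactual for the δ-approximate counterfactual problem. -/
def ValidApprox {A : Type*} (σ : (A → ℝ) → A → ℝ) (τ : A → ℝ) (αs : A) (ss δ : ℝ)
    (τ' : A → ℝ) : Prop :=
  τ' ≠ τ ∧ (∀ a, τ' a ∈ Set.Icc (0 : ℝ) 1) ∧
    ((σ τ αs < ss ∧ ss ≤ σ τ' αs ∧ σ τ' αs ≤ ss + δ) ∨
     (σ τ αs > ss ∧ ss - δ ≤ σ τ' αs ∧ σ τ' αs ≤ ss))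

/-- A valid counterfactual for the weak counterfactual problem. -/
def ValidWeak {A : Type*} (σ : (A → ℝ) → A → ℝ) (τ : A → ℝ) (αs : A) (ss : ℝ)
    (τ' : A → ℝ) : Prop :=
  τ' ≠ τ ∧ (∀ a, τ' a ∈ Set.Icc (0 : ℝ) 1) ∧
    ((σ τ αs < ss ∧ ss ≤ σ τ' αs) ∨ (σ τ αs > ss ∧ σ τ' αs ≤ ss))

/-- Nullified-validity (neutral case): nullifying the base score of an argument neutral
to the topic argument preserves validity for the strong, δ-approximate, and weak
counterfactual problems, given directionality. -/
theorem nullified_validity_neutral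
    {A : Type*} [Fintype A] [DecidableEq A]
    (att sup : A → A → Prop) (hdisj : ∀ a b, ¬ (att a b ∧ sup a b))
    (σ : (A → ℝ) → A → ℝ) (hdir : Directional att sup σ)
    (τ : A → ℝ) (hτ : ∀ a, τ a ∈ Set.Icc (0 : ℝ) 1)
    (αs : A) (ss δ : ℝ)
    (β : A) (hβ : β ≠ αs) (hneu : Neutral att sup β αs)
    (τs τ0 : A → ℝ) (h0 : τ0 = fun γ => if γ = β then 0 else τs γ)
    (hne : τ0 ≠ τ) :
    (ValidStrong σ τ αs ss τs → ValidStrong σ τ αs ss τ0) ∧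
    (ValidApprox σ τ αs ss δ τs → ValidApprox σ τ αs ss δ τ0) ∧
    (ValidWeak σ τ αs ss τs → ValidWeak σ τ αs ss τ0) := by
  have hσ : σ τ0 αs = σ τs αs := by
    apply hdir
    · simp [h0, Ne.symm hβ]
    · intro γ hγ
      have hγβ : γ ≠ β := by
        rintro rfl
        obtain ⟨l, hl⟩ := hγ
        exact hneu l hl
      simp [h0, hγβ]
  have hicc : (∀ a, τs a ∈ Set.Icc (0 : ℝ) 1) → ∀ a, τ0 a ∈ Set.Icc (0 : ℝ) 1 := by
    intro h a
    by_cases ha : a = β <;> simp [h0, ha]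
    · exact h a
  refine ⟨?_, ?_, ?_⟩ <;> rintro ⟨-, h2, h3⟩ <;>
    exact ⟨hne, hicc h2, by rw [hσ]; exact h3⟩
end

section
/- The DF-QuAD semantics satisfies monotonicity on direct edges: for any arguments α, β with (β,α) an edge, and base score functions τ₁, τ₂ differing only at β with τ₁(β) ≤ τ₂(β), in an acyclic QBAF where β is a direct attacker of α and the only argument whose strength changes among α's attackers and supporters: if (β,α) ∈ R⁻ then σ^{DF}_{τ₁}(α) ≥ σ^{DF}_{τ₂}(α), and if (β,α) ∈ R⁺ then σ^{DF}_{τ₁}(α) ≤ σ^{DF}_{τ₂}(α). In particular, the DF-QuAD influence-aggregation composition is monotonically non-increasing in the strength of each attacker and non-decreasing in the strength of each supporter, with all other strengths and the base score fixed. -/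
open Finset

/-- The DF-QuAD strength of an argument `a` with base score `τa`, as a function of the
strengths `s` of the other arguments (its attackers and supporters). -/
noncomputable def dfqStrength {A : Type*} [Fintype A] (att sup : A → A → Prop)
    [DecidableRel att] [DecidableRel sup] (τa : ℝ) (s : A → ℝ) (a : A) : ℝ :=
  let E := (∏ b ∈ univ.filter (fun b => att b a), (1 - s b))
         - (∏ b ∈ univ.filter (fun b => sup b a), (1 - s b))
  if E ≤ 0 then τa - τa * |E| else τa + (1 - τa) * E

private lemma dfq_fmono (τa : ℝ) (h0 : 0 ≤ τa) (h1 : τa ≤ 1) {E₁ E₂ : ℝ} (h : E₁ ≤ E₂) :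
    (if E₁ ≤ 0 then τa - τa * |E₁| else τa + (1 - τa) * E₁)
      ≤ (if E₂ ≤ 0 then τa - τa * |E₂| else τa + (1 - τa) * E₂) := by
  split_ifs with hA hB hB
  · rw [abs_of_nonpos hA, abs_of_nonpos hB]; nlinarith
  · rw [abs_of_nonpos hA]; push_neg at hB; nlinarith
  · exact absurd (h.trans hB) hA
  · push_neg at hA hB; nlinarith

/-- DF-QuAD is monotone on direct edges: with all other strengths and the base score
fixed, increasing the strength of a direct attacker does not increase, and increasing
the strength of a direct supporter does not decrease, the DF-QuAD strength of `a`. -/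
theorem dfquad_direct_monotone
    {A : Type*} [Fintype A]
    (att sup : A → A → Prop) [DecidableRel att] [DecidableRel sup]
    (hdisj : ∀ a b, ¬ (att a b ∧ sup a b))
    (a β : A) (τa : ℝ) (hτa : τa ∈ Set.Icc (0 : ℝ) 1)
    (s₁ s₂ : A → ℝ)
    (hs₁ : ∀ b, s₁ b ∈ Set.Icc (0 : ℝ) 1) (hs₂ : ∀ b, s₂ b ∈ Set.Icc (0 : ℝ) 1)
    (hle : s₁ β ≤ s₂ β) (heq : ∀ γ, γ ≠ β → s₁ γ = s₂ γ) :
    (att β a → dfqStrength att sup τa s₂ a ≤ dfqStrength att sup τa s₁ a) ∧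
    (sup β a → dfqStrength att sup τa s₁ a ≤ dfqStrength att sup τa s₂ a) := by
  obtain ⟨hτ0, hτ1⟩ := hτa
  constructor
  · intro hatt
    -- supporter product equal
    have hsupP : (∏ b ∈ univ.filter (fun b => sup b a), (1 - s₁ b))
        = (∏ b ∈ univ.filter (fun b => sup b a), (1 - s₂ b)) := by
      apply Finset.prod_congr rfl
      intro b hb
      simp only [Finset.mem_filter] at hb
      have hbβ : b ≠ β := by
        rintro rfl; exact hdisj b a ⟨hatt, hb.2⟩
      rw [heq b hbβ]
    have hattP : (∏ b ∈ univ.filter (fun b => att b a), (1 - s₂ b))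
        ≤ (∏ b ∈ univ.filter (fun b => att b a), (1 - s₁ b)) := by
      apply Finset.prod_le_prod
      · intro b _; linarith [(hs₂ b).2]
      · intro b _
        by_cases hbβ : b = β
        · subst hbβ; linarith
        · rw [heq b hbβ]
    unfold dfqStrength
    simp only []
    apply dfq_fmono τa hτ0 hτ1
    rw [← hsupP]; linarith
  · intro hsup
    have hattP : (∏ b ∈ univ.filter (fun b => att b a), (1 - s₁ b))
        = (∏ b ∈ univ.filter (fun b => att b a), (1 - s₂ b)) := by
      apply Finset.prod_congr rfl
      intro b hb
      simp only [Finset.mem_filter] at hb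
      have hbβ : b ≠ β := by
        rintro rfl; exact hdisj b a ⟨hb.2, hsup⟩
      rw [heq b hbβ]
    have hsupP : (∏ b ∈ univ.filter (fun b => sup b a), (1 - s₂ b))
        ≤ (∏ b ∈ univ.filter (fun b => sup b a), (1 - s₁ b)) := by
      apply Finset.prod_le_prod
      · intro b _; linarith [(hs₂ b).2]
      · intro b _
        by_cases hbβ : b = β
        · subst hbβ; linarith
        · rw [heq b hbβ]
    unfold dfqStrength
    simp only []
    apply dfq_fmono τa hτ0 hτ1
    rw [hattP]; linarith
end
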